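/- Let z : ℝ → ℝ be twice differentiable and satisfy z''(λ) + (1 - G(λ)) z(λ) = k(λ) with |G(λ)| ≤ 1/10 for all λ ≥ 0, where G is differentiable and k is integrable. Define Y(λ) = (z'(λ)² + (1 - G(λ)) z(λ)²)^{1/2}. Then there is a universal constant C such that for all λ ≥ 0, Y(λ) ≤ C ( (z'(0)² + z(0)²)^{1/2} + ∫₀^λ (|k(s)| + |G'(s) z(s)|) ds ). -/

import Mathlib

open MeasureTheory

/-- Energy estimate for the perturbed oscillator `z'' + (1 - G) z = k` with `|G| ≤ 1/10`:
`Y(λ) = sqrt(z'(λ)² + (1-G(λ)) z(λ)²)` is controlled by the initial energy plus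
`∫₀^λ (|k| + |G' z|)`, with a universal constant. -/
theorem stmt0 :
    ∃ C : ℝ, 0 < C ∧
      ∀ (z z' z'' G G' k : ℝ → ℝ),
        (∀ l : ℝ, HasDerivAt z (z' l) l) →
        (∀ l : ℝ, HasDerivAt z' (z'' l) l) →
        (∀ l : ℝ, HasDerivAt G (G' l) l) →
        (∀ l : ℝ, 0 ≤ l → |G l| ≤ 1 / 10) →
        (∀ l : ℝ, 0 ≤ l → z'' l + (1 - G l) * z l = k l) →
        (∀ l : ℝ, 0 ≤ l → IntervalIntegrable k volume 0 l) →
        (∀ l : ℝ, 0 ≤ l → IntervalIntegrable (fun s => G' s * z s) volume 0 l) →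
        ∀ l : ℝ, 0 ≤ l →
          Real.sqrt ((z' l) ^ 2 + (1 - G l) * (z l) ^ 2) ≤
            C * (Real.sqrt ((z' 0) ^ 2 + (z 0) ^ 2)
              + ∫ s in (0:ℝ)..l, (|k s| + |G' s * z s|)) := by
  refine ⟨2, by norm_num, ?_⟩
  intro z z' z'' G G' k hz hz' hG hGb hode hk hGz l hl
  have hzd : Differentiable ℝ z := fun s => (hz s).differentiableAt
  have hz'd : Differentiable ℝ z' := fun s => (hz' s).differentiableAt
  have hGd : Differentiable ℝ G := fun s => (hG s).differentiableAt
  have hzc : Continuous z := hzd.continuous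
  have hz'c : Continuous z' := hz'd.continuous
  have hGc : Continuous G := hGd.continuous
  set E : ℝ → ℝ := fun s => (z' s) ^ 2 + (1 - G s) * (z s) ^ 2 with hEdef
  set g : ℝ → ℝ := fun s => |k s| + |G' s * z s| with hgdef
  have hEc : Continuous E := by
    apply Continuous.add (hz'c.pow 2) (((continuous_const.sub hGc).mul (hzc.pow 2)))
  -- 1 - G s ≥ 9/10 on [0, ∞)
  have hGlb : ∀ s : ℝ, 0 ≤ s → (9:ℝ)/10 ≤ 1 - G s := by
    intro s hs
    have := hGb s hs
    have h1 := abs_le.mp this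
    linarith [h1.2]
  have hEnn : ∀ s : ℝ, 0 ≤ s → 0 ≤ E s := by
    intro s hs
    have h := hGlb s hs
    have : 0 ≤ (1 - G s) * (z s)^2 := mul_nonneg (by linarith) (sq_nonneg _)
    positivity
  have hgnn : ∀ s : ℝ, 0 ≤ g s := fun s => add_nonneg (abs_nonneg _) (abs_nonneg _)
  have hgint : IntervalIntegrable g volume 0 l :=
    (hk l hl).abs.add (hGz l hl).abs
  have hInn : 0 ≤ ∫ s in (0:ℝ)..l, g s :=
    intervalIntegral.integral_nonneg hl (fun s _ => hgnn s)
  -- derivative of E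
  have hE' : ∀ s : ℝ, HasDerivAt E (2 * z' s * z'' s + (-(G' s) * (z s)^2 + (1 - G s) * (2 * z s * z' s))) s := by
    intro s
    have h1 : HasDerivAt (fun t => (z' t)^2) (2 * z' s * z'' s) s := by
      have := ((hz' s).pow 2)
      simpa [Pi.pow_def, mul_comm, mul_assoc, mul_left_comm] using this
    have h2 : HasDerivAt (fun t => (1 - G t) * (z t)^2) (-(G' s) * (z s)^2 + (1 - G s) * (2 * z s * z' s)) s := by
      have hg1 : HasDerivAt (fun t => 1 - G t) (-(G' s)) s := by
        simpa [Pi.sub_def] using (hasDerivAt_const s (1:ℝ)).sub (hG s)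
      have hg2 : HasDerivAt (fun t => (z t)^2) (2 * z s * z' s) s := by
        have := ((hz s).pow 2)
        simpa [Pi.pow_def, mul_comm, mul_assoc, mul_left_comm] using this
      exact hg1.mul hg2
    exact h1.add h2
  have hE'' : ∀ s : ℝ, 0 ≤ s → HasDerivAt E (2 * z' s * k s - G' s * (z s)^2) s := by
    intro s hs
    have h := hE' s
    have hodes : z'' s = k s - (1 - G s) * z s := by
      have := hode s hs; linarith
    convert h using 1
    rw [hodes]; ring
  -- key estimate with ε-regularization
  have key : ∀ ε : ℝ, 0 < ε →
      Real.sqrt (E l) ≤ Real.sqrt (E 0) + Real.sqrt ε + ∫ s in (0:ℝ)..l, g s := by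
    intro ε hε
    set W : ℝ → ℝ := fun s => Real.sqrt (E s + ε) with hWdef
    set φ : ℝ → ℝ := fun s => (2 * z' s * k s - G' s * (z s)^2) / (2 * Real.sqrt (E s + ε)) with hφdef
    have hpos : ∀ s ∈ Set.uIcc (0:ℝ) l, 0 < E s + ε := by
      intro s hs
      rw [Set.uIcc_of_le hl] at hs
      have := hEnn s hs.1
      linarith
    have hW' : ∀ s ∈ Set.uIcc (0:ℝ) l, HasDerivAt W (φ s) s := by
      intro s hs
      have hsnn : 0 ≤ s := by rw [Set.uIcc_of_le hl] at hs; exact hs.1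
      have h1 : HasDerivAt (fun t => E t + ε) (2 * z' s * k s - G' s * (z s)^2) s :=
        (hE'' s hsnn).add_const ε
      exact h1.sqrt (ne_of_gt (hpos s hs))
    have hWc : ContinuousOn (fun s => (2 * Real.sqrt (E s + ε))⁻¹) (Set.uIcc (0:ℝ) l) := by
      apply ContinuousOn.inv₀
      · exact (continuous_const.mul ((hEc.add continuous_const).sqrt)).continuousOn
      · intro s hs
        have := hpos s hs
        have : 0 < Real.sqrt (E s + ε) := Real.sqrt_pos.mpr this
        positivity
    have hφint : IntervalIntegrable φ volume 0 l := by
      have h1 : IntervalIntegrable (fun s => 2 * z' s * k s - G' s * (z s)^2) volume 0 l := by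
        have ha : IntervalIntegrable (fun s => 2 * z' s * k s) volume 0 l :=
          (hk l hl).continuousOn_mul ((continuous_const.mul hz'c).continuousOn)
        have hb : IntervalIntegrable (fun s => G' s * (z s)^2) volume 0 l := by
          have := (hGz l hl).mul_continuousOn (hzc.continuousOn (s := Set.uIcc 0 l))
          simpa [mul_assoc, sq] using this
        exact ha.sub hb
      have := h1.mul_continuousOn hWc
      simpa [hφdef, div_eq_mul_inv] using this
    have hftc : ∫ s in (0:ℝ)..l, φ s = W l - W 0 :=
      intervalIntegral.integral_eq_sub_of_hasDerivAt hW' hφint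
    have hmono : ∫ s in (0:ℝ)..l, φ s ≤ ∫ s in (0:ℝ)..l, g s := by
      apply intervalIntegral.integral_mono_on hl hφint hgint
      intro s hs
      have hsnn : 0 ≤ s := hs.1
      have hEp : 0 < E s + ε := by
        have := hEnn s hsnn; linarith
      have hWp : 0 < Real.sqrt (E s + ε) := Real.sqrt_pos.mpr hEp
      rw [hφdef, div_le_iff₀ (by positivity)]
      have hz'b : |z' s| ≤ Real.sqrt (E s + ε) := by
        rw [← Real.sqrt_sq_eq_abs]
        apply Real.sqrt_le_sqrt
        have h := hGlb s hsnn
        show z' s ^ 2 ≤ (z' s ^ 2 + (1 - G s) * z s ^ 2) + ε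
        nlinarith [sq_nonneg (z s)]
      have hzb : |z s| ≤ 2 * Real.sqrt (E s + ε) := by
        have h2 : 2 * Real.sqrt (E s + ε) = Real.sqrt (4 * (E s + ε)) := by
          rw [show (4:ℝ) * (E s + ε) = 2^2 * (E s + ε) by ring,
            Real.sqrt_mul (by positivity), Real.sqrt_sq (by norm_num)]
        rw [h2, ← Real.sqrt_sq_eq_abs]
        apply Real.sqrt_le_sqrt
        have h := hGlb s hsnn
        show z s ^ 2 ≤ 4 * ((z' s ^ 2 + (1 - G s) * z s ^ 2) + ε)
        nlinarith [sq_nonneg (z' s), sq_nonneg (z s)]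
      have h1 : 2 * z' s * k s ≤ 2 * |z' s| * |k s| := by
        calc 2 * z' s * k s ≤ |2 * z' s * k s| := le_abs_self _
        _ = 2 * |z' s| * |k s| := by rw [abs_mul, abs_mul]; simp [abs_of_nonneg]
      have h2 : -(G' s * (z s)^2) ≤ |G' s * z s| * |z s| := by
        calc -(G' s * (z s)^2) ≤ |G' s * (z s)^2| := neg_le_abs _
        _ = |G' s * z s| * |z s| := by rw [sq, ← mul_assoc, abs_mul]
      have hknn : 0 ≤ |k s| := abs_nonneg _
      have hGznn : 0 ≤ |G' s * z s| := abs_nonneg _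
      calc 2 * z' s * k s - G' s * (z s)^2
          ≤ 2 * |z' s| * |k s| + |G' s * z s| * |z s| := by linarith
        _ ≤ 2 * Real.sqrt (E s + ε) * |k s| + |G' s * z s| * (2 * Real.sqrt (E s + ε)) := by
            apply add_le_add
            · apply mul_le_mul_of_nonneg_right _ hknn
              linarith
            · exact mul_le_mul_of_nonneg_left hzb hGznn
        _ = g s * (2 * Real.sqrt (E s + ε)) := by rw [hgdef]; ring
    have hWl : W l ≤ W 0 + ∫ s in (0:ℝ)..l, g s := by
      have := hmono
      rw [hftc] at this
      linarith
    have hW0 : W 0 ≤ Real.sqrt (E 0) + Real.sqrt ε := by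
      rw [hWdef]
      have h : E 0 + ε ≤ (Real.sqrt (E 0) + Real.sqrt ε)^2 := by
        have h1 : Real.sqrt (E 0) ^ 2 = E 0 := Real.sq_sqrt (hEnn 0 le_rfl)
        have h2 : Real.sqrt ε ^ 2 = ε := Real.sq_sqrt hε.le
        nlinarith [Real.sqrt_nonneg (E 0), Real.sqrt_nonneg ε,
          mul_nonneg (Real.sqrt_nonneg (E 0)) (Real.sqrt_nonneg ε)]
      calc Real.sqrt (E 0 + ε) ≤ Real.sqrt ((Real.sqrt (E 0) + Real.sqrt ε)^2) :=
            Real.sqrt_le_sqrt h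
        _ = Real.sqrt (E 0) + Real.sqrt ε := Real.sqrt_sq (by positivity)
    have hEl : Real.sqrt (E l) ≤ W l := by
      rw [hWdef]
      exact Real.sqrt_le_sqrt (by linarith)
    linarith
  -- remove ε
  have hmain : Real.sqrt (E l) ≤ Real.sqrt (E 0) + ∫ s in (0:ℝ)..l, g s := by
    apply le_of_forall_pos_le_add
    intro δ hδ
    have := key (δ^2) (by positivity)
    rw [Real.sqrt_sq hδ.le] at this
    linarith
  -- bound initial energy
  have hE0 : Real.sqrt (E 0) ≤ 2 * Real.sqrt ((z' 0)^2 + (z 0)^2) := by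
    have h2 : 2 * Real.sqrt ((z' 0)^2 + (z 0)^2) = Real.sqrt (4 * ((z' 0)^2 + (z 0)^2)) := by
      rw [show (4:ℝ) * ((z' 0)^2 + (z 0)^2) = 2^2 * ((z' 0)^2 + (z 0)^2) by ring,
        Real.sqrt_mul (by positivity), Real.sqrt_sq (by norm_num)]
    rw [h2]
    apply Real.sqrt_le_sqrt
    have h := abs_le.mp (hGb 0 le_rfl)
    show z' 0 ^ 2 + (1 - G 0) * z 0 ^ 2 ≤ 4 * (z' 0 ^ 2 + z 0 ^ 2)
    nlinarith [sq_nonneg (z 0), sq_nonneg (z' 0)]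
  calc Real.sqrt ((z' l) ^ 2 + (1 - G l) * (z l) ^ 2) = Real.sqrt (E l) := rfl
    _ ≤ Real.sqrt (E 0) + ∫ s in (0:ℝ)..l, g s := hmain
    _ ≤ 2 * Real.sqrt ((z' 0)^2 + (z 0)^2) + ∫ s in (0:ℝ)..l, g s := by linarith
    _ ≤ 2 * (Real.sqrt ((z' 0)^2 + (z 0)^2) + ∫ s in (0:ℝ)..l, g s) := by linarith
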